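/- Let $p \geq 1$. If $m$ and $m'$ are $p$-adjacent profiles, i.e., there exist non-negative integers $a, k, l$ with $pa \leq k < l \leq p(a+1)$ and $m - m' = \pm(e_k + e_l - e_{k+1} - e_{l-1})$, then $m^{[p]} = (m')^{[p]}$. -/

import Mathlib

/-- The indicator profile `e k` (with the convention `e 0 = 0`). -/
noncomputable def eProf (k : ℕ) : ℕ →₀ ℤ := if k = 0 then 0 else Finsupp.single k 1

/-- The `a`-th entry (`a ≥ 1`) of `m^[p]`:
`∑_{-p < j < p} (p - |j|) m_{p a + j}` (with `m_i = 0` for `i ≤ 0`). -/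
noncomputable def profilePow (m : ℕ →₀ ℤ) (p : ℕ) (a : ℕ) : ℤ :=
  ∑ j ∈ Finset.Ioo (-(p : ℤ)) (p : ℤ), ((p : ℤ) - |j|) * m ((p * a + j).toNat)

lemma profilePow_sub (m m' : ℕ →₀ ℤ) (p a : ℕ) :
    profilePow (m - m') p a = profilePow m p a - profilePow m' p a := by
  simp [profilePow, Finsupp.sub_apply, mul_sub, Finset.sum_sub_distrib]

lemma profilePow_eval (p a n : ℕ) (hp : 1 ≤ p) (ha : 1 ≤ a) :
    profilePow (eProf n) p a = max ((p : ℤ) - |(n : ℤ) - p * a|) 0 := by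
  have hpa : (p : ℤ) ≤ (p : ℤ) * a := by
    have := Nat.le_mul_of_pos_right p ha
    exact_mod_cast this
  unfold profilePow eProf
  by_cases hn : n = 0
  · subst hn
    rw [if_pos rfl]
    simp only [Finsupp.coe_zero, Pi.zero_apply, mul_zero, Finset.sum_const_zero]
    have : |(0 : ℤ) - (p : ℤ) * a| = (p : ℤ) * a := by
      rw [zero_sub, abs_neg, abs_of_nonneg]; positivity
    rw [Nat.cast_zero, this]
    omega
  · simp only [if_neg hn, Finsupp.single_apply]
    have key : ∀ j ∈ Finset.Ioo (-(p : ℤ)) (p : ℤ),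
        ((p : ℤ) - |j|) * (if n = ((p : ℤ) * a + j).toNat then (1 : ℤ) else 0)
          = if j = (n : ℤ) - (p : ℤ) * a then ((p : ℤ) - |j|) else 0 := by
      intro j hj
      simp only [Finset.mem_Ioo] at hj
      split_ifs with h1 h2 h2 <;> [ring; skip; skip; ring] <;> exfalso <;> omega
    rw [Finset.sum_congr rfl key, Finset.sum_ite_eq' (Finset.Ioo (-(p : ℤ)) (p : ℤ))]
    simp only [Finset.mem_Ioo, Int.abs_eq_natAbs]
    split_ifs with h <;> omega


/-- If `m` and `m'` are `p`-adjacent profiles, i.e. `m - m' = ±(e_k + e_l - e_{k+1} - e_{l-1})`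
for some `a, k, l` with `p a ≤ k < l ≤ p (a+1)`, then `m^[p] = m'^[p]`. -/
theorem stmt15 (p : ℕ) (hp : 1 ≤ p) (m m' : ℕ →₀ ℤ) (hm0 : m 0 = 0) (hm'0 : m' 0 = 0)
    (hadj : ∃ a k l : ℕ, p * a ≤ k ∧ k < l ∧ l ≤ p * (a + 1) ∧
      (m - m' = eProf k + eProf l - eProf (k + 1) - eProf (l - 1) ∨
       m' - m = eProf k + eProf l - eProf (k + 1) - eProf (l - 1))) :
    ∀ a : ℕ, 1 ≤ a → profilePow m p a = profilePow m' p a := by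
  obtain ⟨a, k, l, hak, hkl, hla, hd⟩ := hadj
  intro b hb
  -- key : the difference profile has zero profilePow
  have key : profilePow (eProf k + eProf l - eProf (k + 1) - eProf (l - 1)) p b = 0 := by
    have hadd : ∀ u v : ℕ →₀ ℤ, profilePow (u + v) p b = profilePow u p b + profilePow v p b := by
      intro u v
      simp [profilePow, Finsupp.add_apply, mul_add, Finset.sum_add_distrib]
    rw [profilePow_sub, profilePow_sub, hadd,
      profilePow_eval p b k hp hb, profilePow_eval p b l hp hb,
      profilePow_eval p b (k + 1) hp hb, profilePow_eval p b (l - 1) hp hb]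
    have h1 : ((l : ℤ) - 1 : ℤ) = ((l - 1 : ℕ) : ℤ) := by omega
    rw [← h1]
    push_cast
    -- tent identity
    have hcase : (p : ℤ) * a + p ≤ (p : ℤ) * b - p ∨ (p : ℤ) * a = (p : ℤ) * b - p ∨
        (p : ℤ) * a = (p : ℤ) * b ∨ (p : ℤ) * b + p ≤ (p : ℤ) * a := by
      rcases Nat.lt_or_ge (a + 1) b with h | h
      · left
        have : p * (a + 2) ≤ p * b := Nat.mul_le_mul_left p (by omega)
        push_cast at this ⊢; linarith
      rcases Nat.eq_or_lt_of_le h with h' | h'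
      · right; left; subst h'; push_cast; ring
      rcases Nat.lt_or_ge a b with h2 | h2
      · right; right; left
        have : a = b := by omega
        subst this; rfl
      rcases Nat.eq_or_lt_of_le h2 with h3 | h3
      · right; right; left; rw [h3]
      · right; right; right
        have : p * (b + 1) ≤ p * a := Nat.mul_le_mul_left p (by omega)
        push_cast at this ⊢; linarith
    have hak' : (p : ℤ) * a ≤ (k : ℤ) := by exact_mod_cast hak
    have hla' : (l : ℤ) ≤ (p : ℤ) * a + p := by
      have : (l : ℤ) ≤ (p : ℤ) * (a + 1) := by exact_mod_cast hla
      linarith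
    have hkl' : (k : ℤ) < l := by exact_mod_cast hkl
    simp only [Int.abs_eq_natAbs] at *
    omega
  rcases hd with hd | hd
  · have := profilePow_sub m m' p b
    rw [hd, key] at this
    linarith
  · have := profilePow_sub m' m p b
    rw [hd, key] at this
    linarith
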